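/- Let √2 − 1 < α < 1 and define g(s) := ((1+α)s + (1−α))² − 4s·exp(α(s−1)) for real s. Then there exists δ > 0 such that g(s) < 0 for all s ∈ (1−δ, 1). Moreover g(1) = 0, g'(1) = 0, and g''(1) = −2(α + 1 + √2)(α + 1 − √2) < 0. -/

import Mathlib

/-- For √2 − 1 < α < 1 and g(s) = ((1+α)s + (1−α))² − 4s·exp(α(s−1)),
there exists δ > 0 with g < 0 on (1−δ, 1); moreover g(1) = 0, g'(1) = 0 and
g''(1) = −2(α + 1 + √2)(α + 1 − √2) < 0. -/
theorem g_neg_near_one_large_alpha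
    (α : ℝ) (hα0 : Real.sqrt 2 - 1 < α) (hα1 : α < 1)
    (g : ℝ → ℝ)
    (hg : ∀ s : ℝ, g s = ((1 + α) * s + (1 - α)) ^ 2 - 4 * s * Real.exp (α * (s - 1))) :
    (∃ δ > (0 : ℝ), ∀ s ∈ Set.Ioo (1 - δ) 1, g s < 0) ∧
    g 1 = 0 ∧
    deriv g 1 = 0 ∧
    deriv (deriv g) 1 = -2 * (α + 1 + Real.sqrt 2) * (α + 1 - Real.sqrt 2) ∧
    deriv (deriv g) 1 < 0 := by
  have hgfun : g = fun s => ((1 + α) * s + (1 - α)) ^ 2 - 4 * s * Real.exp (α * (s - 1)) :=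
    funext hg
  set g1 : ℝ → ℝ := fun s =>
    2 * (1 + α) * ((1 + α) * s + (1 - α)) - (4 * Real.exp (α * (s - 1))
      + 4 * s * (α * Real.exp (α * (s - 1)))) with hg1
  set g2 : ℝ → ℝ := fun s =>
    2 * (1 + α) * (1 + α) - (8 * α * Real.exp (α * (s - 1))
      + 4 * s * (α * α * Real.exp (α * (s - 1)))) with hg2
  have hexp : ∀ s : ℝ, HasDerivAt (fun s : ℝ => Real.exp (α * (s - 1)))
      (α * Real.exp (α * (s - 1))) s := by
    intro s
    have h1 : HasDerivAt (fun s : ℝ => α * (s - 1)) α s := by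
      simpa using (((hasDerivAt_id s).sub_const 1).const_mul α)
    simpa [mul_comm] using h1.exp
  have hd1 : ∀ s, HasDerivAt g (g1 s) s := by
    intro s
    rw [hgfun]
    have h1 : HasDerivAt (fun s : ℝ => ((1 + α) * s + (1 - α)) ^ 2)
        (2 * (1 + α) * ((1 + α) * s + (1 - α))) s := by
      have hl : HasDerivAt (fun s : ℝ => (1 + α) * s + (1 - α)) (1 + α) s := by
        simpa using ((hasDerivAt_id s).const_mul (1 + α)).add_const (1 - α)
      have := hl.fun_pow 2
      refine this.congr_deriv ?_
      ring
    have h2 : HasDerivAt (fun s : ℝ => 4 * s * Real.exp (α * (s - 1)))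
        (4 * Real.exp (α * (s - 1)) + 4 * s * (α * Real.exp (α * (s - 1)))) s := by
      have hl : HasDerivAt (fun s : ℝ => 4 * s) 4 s := by
        simpa using (hasDerivAt_id s).const_mul 4
      simpa using hl.fun_mul (hexp s)
    exact h1.sub h2
  have hd2 : ∀ s, HasDerivAt g1 (g2 s) s := by
    intro s
    have h1 : HasDerivAt (fun s : ℝ => 2 * (1 + α) * ((1 + α) * s + (1 - α)))
        (2 * (1 + α) * (1 + α)) s := by
      have hl : HasDerivAt (fun s : ℝ => (1 + α) * s + (1 - α)) (1 + α) s := by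
        simpa using ((hasDerivAt_id s).const_mul (1 + α)).add_const (1 - α)
      simpa using hl.const_mul (2 * (1 + α))
    have h2 : HasDerivAt (fun s : ℝ => 4 * Real.exp (α * (s - 1)))
        (4 * (α * Real.exp (α * (s - 1)))) s := (hexp s).const_mul 4
    have h3 : HasDerivAt (fun s : ℝ => 4 * s * (α * Real.exp (α * (s - 1))))
        (4 * (α * Real.exp (α * (s - 1))) + 4 * s * (α * (α * Real.exp (α * (s - 1))))) s := by
      have hl : HasDerivAt (fun s : ℝ => 4 * s) 4 s := by
        simpa using (hasDerivAt_id s).const_mul 4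
      simpa using hl.fun_mul ((hexp s).const_mul α)
    have := h1.sub (h2.add h3)
    refine this.congr_deriv ?_
    simp only [hg2]
    ring
  have hdg : deriv g = g1 := funext fun s => (hd1 s).deriv
  have hddg : deriv (deriv g) = g2 := by
    rw [hdg]; exact funext fun s => (hd2 s).deriv
  have hsq : Real.sqrt 2 * Real.sqrt 2 = 2 := Real.mul_self_sqrt (by norm_num)
  have hsnn : (0:ℝ) ≤ Real.sqrt 2 := Real.sqrt_nonneg 2
  have hg1val : g 1 = 0 := by rw [hgfun]; simp; ring
  have hd1val : deriv g 1 = 0 := by rw [hdg]; simp [hg1]; ring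
  have hg2one : g2 1 = -2 * (α + 1 + Real.sqrt 2) * (α + 1 - Real.sqrt 2) := by
    simp only [hg2]
    simp
    nlinarith [hsq]
  have hg2neg : g2 1 < 0 := by
    rw [hg2one]
    have h1 : (0:ℝ) < α + 1 + Real.sqrt 2 := by nlinarith
    have h2 : (0:ℝ) < α + 1 - Real.sqrt 2 := by nlinarith
    nlinarith
  refine ⟨?_, hg1val, hd1val, by rw [hddg]; exact hg2one, by rw [hddg]; exact hg2neg⟩
  -- find δ where g2 < 0
  have hcont : ContinuousAt g2 1 := by
    simp only [hg2]
    fun_prop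
  have hev : ∀ᶠ s in nhds (1:ℝ), g2 s < 0 :=
    hcont.eventually_lt continuousAt_const hg2neg
  rcases Metric.eventually_nhds_iff.mp hev with ⟨δ, hδ, hball⟩
  refine ⟨δ, hδ, fun s hs => ?_⟩
  have hIoo : ∀ x ∈ Set.Ioo (1 - δ) 1, g2 x < 0 := by
    intro x hx
    apply hball
    rw [Real.dist_eq]
    rw [abs_lt]
    constructor <;> [linarith [hx.1]; linarith [hx.2]]
  have hanti : StrictAntiOn g1 (Set.Icc (1 - δ) 1) := by
    apply strictAntiOn_of_deriv_neg (convex_Icc _ _)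
    · exact fun x _ => ((hd2 x).continuousAt).continuousWithinAt
    · intro x hx
      rw [interior_Icc] at hx
      rw [(hd2 x).deriv]
      exact hIoo x hx
  have hg11 : g1 1 = 0 := by rw [← hdg]; exact hd1val
  have hg1pos : ∀ x ∈ Set.Ioo (1 - δ) 1, 0 < g1 x := by
    intro x hx
    have := hanti (Set.mem_Icc.mpr ⟨le_of_lt hx.1, le_of_lt hx.2⟩)
      (Set.mem_Icc.mpr ⟨by linarith, le_refl 1⟩) hx.2
    rw [hg11] at this
    exact this
  have hmono : StrictMonoOn g (Set.Icc (1 - δ) 1) := by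
    apply strictMonoOn_of_deriv_pos (convex_Icc _ _)
    · exact fun x _ => ((hd1 x).continuousAt).continuousWithinAt
    · intro x hx
      rw [interior_Icc] at hx
      rw [(hd1 x).deriv]
      exact hg1pos x hx
  have := hmono (Set.mem_Icc.mpr ⟨le_of_lt hs.1, le_of_lt hs.2⟩)
    (Set.mem_Icc.mpr ⟨by linarith [hs.1], le_refl 1⟩) hs.2
  rw [hg1val] at this
  exact this
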